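/- For the elementary Desboves map f = f_{−1,b,1}, the image (x':y':z') = f(x:y:z) satisfies x' = x(−x³−2z³) and z' = z(2x³+z³); hence each line (x:z) = constant through p₀ = (0:1:0) maps to another such line, and the induced map on the base X = x/z is the Lattès map X ↦ −X(X³+2)/(2X³+1), independent of the parameter b. -/
import Mathlib

/-- `Φ(x,y,z) = x³ + y³ + z³`. -/
noncomputable def fermatPhi (x y z : ℂ) : ℂ := x ^ 3 + y ^ 3 + z ^ 3

/-- The Desboves map `f_{a,b,c}` on homogeneous representatives in `ℂ³`. -/
noncomputable def desbovesF (a b c : ℂ) (x y z : ℂ) : ℂ × ℂ × ℂ :=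
  (x * (y ^ 3 - z ^ 3 + a * fermatPhi x y z),
   y * (z ^ 3 - x ^ 3 + b * fermatPhi x y z),
   z * (x ^ 3 - y ^ 3 + c * fermatPhi x y z))

/-- **Elementary Desboves maps and the induced Lattès map** (Example 6.1).
For the elementary Desboves map `f = f_{−1,b,1}`, the image `(x':y':z') = f(x:y:z)`
satisfies `x' = x(−x³−2z³)` and `z' = z(2x³+z³)` (independently of `y` and `b`); hence each
line `(x:z) = const` through `p₀ = (0:1:0)` maps to such a line, and the induced map on the
base coordinate `X = x/z` is the Lattès map `X ↦ −X(X³+2)/(2X³+1)`, independent of `b`. -/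
theorem elementary_desboves_lattes (b : ℂ) :
    (∀ x y z : ℂ,
      (desbovesF (-1) b 1 x y z).1 = x * (-x ^ 3 - 2 * z ^ 3) ∧
      (desbovesF (-1) b 1 x y z).2.2 = z * (2 * x ^ 3 + z ^ 3)) ∧
    (∀ x y z : ℂ, z ≠ 0 → (desbovesF (-1) b 1 x y z).2.2 ≠ 0 →
      (desbovesF (-1) b 1 x y z).1 / (desbovesF (-1) b 1 x y z).2.2 =
        -(x / z) * ((x / z) ^ 3 + 2) / (2 * (x / z) ^ 3 + 1)) := by
  have key : ∀ x y z : ℂ,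
      (desbovesF (-1) b 1 x y z).1 = x * (-x ^ 3 - 2 * z ^ 3) ∧
      (desbovesF (-1) b 1 x y z).2.2 = z * (2 * x ^ 3 + z ^ 3) := by
    intro x y z
    constructor <;> · simp only [desbovesF, fermatPhi]; ring
  refine ⟨key, ?_⟩
  intro x y z hz hzz
  rw [(key x y z).1, (key x y z).2]
  have h2 : (2 : ℂ) * x ^ 3 + z ^ 3 ≠ 0 := by
    intro h
    apply hzz
    rw [(key x y z).2, h, mul_zero]
  field_simp
  ring
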